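/- Let (N, D, θ) be a sandpile model in dimension d with complete neighborhood N, set r = max{|v|_∞ : v ∈ N}, and let c be a configuration lying within the elementary hypercube of side n with c(x) < 2θ for every cell x. Then for every t ≥ 0, the configuration c' = F^t(c) satisfies c'(x) = 0 for every cell x with |x|_∞ > 4·θ·r·n^d. -/

import Mathlib

/-- A sandpile model in dimension `d`: a finite nonempty neighborhood
`N ⊆ ℤ^d \ {0}` and a distribution `D` with `D v ≥ 1` for `v ∈ N`. -/
structure Sandpile (d : ℕ) where
  N : Finset (Fin d → ℤ)
  D : (Fin d → ℤ) → ℕ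
  N_nonempty : N.Nonempty
  zero_not_mem : (0 : Fin d → ℤ) ∉ N
  D_pos : ∀ v ∈ N, 1 ≤ D v

/-- The stability threshold `θ = Σ_{v ∈ N} D(v)`. -/
def Sandpile.θ {d : ℕ} (M : Sandpile d) : ℕ := ∑ v ∈ M.N, M.D v

/-- The Heaviside function: `H n = 1` if `n ≥ 0`, else `0`. -/
def Heaviside (n : ℤ) : ℕ := if 0 ≤ n then 1 else 0

/-- The parallel global rule `F`. -/
def Sandpile.F {d : ℕ} (M : Sandpile d) (c : (Fin d → ℤ) → ℕ) : (Fin d → ℤ) → ℕ :=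
  fun x => c x - M.θ * Heaviside ((c x : ℤ) - (M.θ : ℤ))
    + ∑ y ∈ M.N, M.D y * Heaviside ((c (x + y) : ℤ) - (M.θ : ℤ))

/-- A configuration is stable when every cell holds fewer than `θ` grains. -/
def Sandpile.Stable {d : ℕ} (M : Sandpile d) (c : (Fin d → ℤ) → ℕ) : Prop :=
  ∀ x, c x < M.θ

/-- A configuration is finite when its total number of grains is finite,
equivalently its support is finite. -/
def FiniteConfig {d : ℕ} (c : (Fin d → ℤ) → ℕ) : Prop :=
  (Function.support c).Finite

/-- Sequential toppling at an unstable cell `x`: remove `θ` grains from `x`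
and add `D(y−x)` grains to each `y ∈ x + N`, other cells unchanged. -/
def Sandpile.SeqStepAt {d : ℕ} (M : Sandpile d) (x : Fin d → ℤ)
    (c c' : (Fin d → ℤ) → ℕ) : Prop :=
  M.θ ≤ c x ∧
    ∀ y, c' y = (if y = x then c y - M.θ else c y)
      + (if y - x ∈ M.N then M.D (y - x) else 0)

/-- `c ⇀ c'`: a sequential toppling at some unstable cell. -/
def Sandpile.SeqStep {d : ℕ} (M : Sandpile d)
    (c c' : (Fin d → ℤ) → ℕ) : Prop :=
  ∃ x, M.SeqStepAt x c c'

/-- `c ⇀* c'`: reflexive–transitive closure of `⇀`. -/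
def Sandpile.SeqReach {d : ℕ} (M : Sandpile d)
    (c c' : (Fin d → ℤ) → ℕ) : Prop :=
  Relation.ReflTransGen M.SeqStep c c'

/-- The neighborhood is complete: every element of `ℤ^d` is a nonnegative
integer combination of elements of `N`. -/
def Sandpile.Complete {d : ℕ} (M : Sandpile d) : Prop :=
  ∀ z : Fin d → ℤ, ∃ a : (Fin d → ℤ) → ℕ, z = ∑ v ∈ M.N, (a v : ℤ) • v

/-- The configuration lies within the elementary hypercube of side `n`:
`c x = 0` for all `x ∉ {0,…,n−1}^d`. -/
def InCube {d : ℕ} (n : ℕ) (c : (Fin d → ℤ) → ℕ) : Prop :=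
  ∀ x : Fin d → ℤ, (¬ ∀ i, 0 ≤ x i ∧ x i < (n : ℤ)) → c x = 0

/-- Add one grain at cell `y` (i.e. `c + 1_y`). -/
def addGrain {d : ℕ} (c : (Fin d → ℤ) → ℕ) (y : Fin d → ℤ) : (Fin d → ℤ) → ℕ :=
  fun x => if x = y then c x + 1 else c x

/-- `r` is the maximal sup-norm of a neighborhood vector:
`r = max{|v|_∞ : v ∈ N}`. -/
def Sandpile.IsRadius {d : ℕ} (M : Sandpile d) (r : ℕ) : Prop :=
  (∀ v ∈ M.N, ∀ i, (v i).natAbs ≤ r) ∧ (∃ v ∈ M.N, ∃ i, (v i).natAbs = r)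

section Aux
variable {d : ℕ}

lemma sb_theta_pos (M : Sandpile d) : 1 ≤ M.θ := by
  obtain ⟨v, hv⟩ := M.N_nonempty
  calc 1 ≤ M.D v := M.D_pos v hv
    _ ≤ M.θ := Finset.single_le_sum (fun w _ => Nat.zero_le _) hv

lemma sb_r_pos (M : Sandpile d) {r : ℕ} (hr : M.IsRadius r) : 1 ≤ r := by
  by_contra h
  push_neg at h
  interval_cases r
  obtain ⟨v, hv⟩ := M.N_nonempty
  have : v = 0 := by
    funext i
    have := hr.1 v hv i
    have : v i = 0 := by omega
    simpa using this
  exact M.zero_not_mem (this ▸ hv)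

lemma sb_H_one {a t : ℕ} (h : t ≤ a) : Heaviside ((a : ℤ) - (t : ℤ)) = 1 := by
  unfold Heaviside
  rw [if_pos]
  omega

lemma sb_H_zero {a t : ℕ} (h : a < t) : Heaviside ((a : ℤ) - (t : ℤ)) = 0 := by
  unfold Heaviside
  rw [if_neg]
  omega

lemma sb_F_def (M : Sandpile d) (c : (Fin d → ℤ) → ℕ) (x : Fin d → ℤ) :
    M.F c x = c x - M.θ * Heaviside ((c x : ℤ) - (M.θ : ℤ))
      + ∑ y ∈ M.N, M.D y * Heaviside ((c (x + y) : ℤ) - (M.θ : ℤ)) := rfl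

end Aux
section Aux2
variable {d : ℕ}

lemma sb_F_keep (M : Sandpile d) {c : (Fin d → ℤ) → ℕ} {z : Fin d → ℤ}
    (h0 : c z ≠ 0) (h1 : c z < M.θ) : M.F c z ≠ 0 := by
  rw [sb_F_def, sb_H_zero h1]
  simp only [Nat.mul_zero, Nat.sub_zero]
  omega

lemma sb_F_recv (M : Sandpile d) {c : (Fin d → ℤ) → ℕ} {z y : Fin d → ℤ}
    (hy : y ∈ M.N) (h : M.θ ≤ c (z + y)) : M.F c z ≠ 0 := by
  rw [sb_F_def]
  have h1 : M.D y * Heaviside ((c (z + y) : ℤ) - (M.θ : ℤ)) ≤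
      ∑ y' ∈ M.N, M.D y' * Heaviside ((c (z + y') : ℤ) - (M.θ : ℤ)) :=
    Finset.single_le_sum (f := fun y' => M.D y' * Heaviside ((c (z + y') : ℤ) - (M.θ : ℤ)))
      (fun w _ => Nat.zero_le _) hy
  rw [sb_H_one h] at h1
  have := M.D_pos y hy
  omega

lemma sb_back (M : Sandpile d) {c : (Fin d → ℤ) → ℕ} {x : Fin d → ℤ}
    (h : M.F c x ≠ 0) : c x ≠ 0 ∨ ∃ y ∈ M.N, M.θ ≤ c (x + y) := by
  by_contra hc
  push_neg at hc
  obtain ⟨h1, h2⟩ := hc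
  apply h
  rw [sb_F_def, h1]
  have hsum : ∑ y ∈ M.N, M.D y * Heaviside ((c (x + y) : ℤ) - (M.θ : ℤ)) = 0 := by
    apply Finset.sum_eq_zero
    intro y hy
    rw [sb_H_zero (h2 y hy), Nat.mul_zero]
  rw [hsum]
  simp

lemma sb_sign_le (M : Sandpile d) (hcomp : M.Complete) (i₀ : Fin d) :
    ∃ y ∈ M.N, y i₀ ≤ 0 := by
  by_contra hall
  push_neg at hall
  obtain ⟨a, ha⟩ := hcomp (fun j => if j = i₀ then -1 else 0)
  have hi := congrFun ha i₀
  simp only [eq_self_iff_true, if_true, Finset.sum_apply, Pi.smul_apply, smul_eq_mul] at hi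
  have : (0 : ℤ) ≤ ∑ v ∈ M.N, (a v : ℤ) * v i₀ := by
    apply Finset.sum_nonneg
    intro v hv
    have h1 : (0 : ℤ) ≤ (a v : ℤ) := Int.natCast_nonneg _
    have h2 : 0 < v i₀ := hall v hv
    positivity
  linarith

lemma sb_sign_ge (M : Sandpile d) (hcomp : M.Complete) (i₀ : Fin d) :
    ∃ y ∈ M.N, 0 ≤ y i₀ := by
  by_contra hall
  push_neg at hall
  obtain ⟨a, ha⟩ := hcomp (fun j => if j = i₀ then 1 else 0)
  have hi := congrFun ha i₀
  simp only [eq_self_iff_true, if_true, Finset.sum_apply, Pi.smul_apply, smul_eq_mul] at hi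
  have : ∑ v ∈ M.N, (a v : ℤ) * v i₀ ≤ 0 := by
    apply Finset.sum_nonpos
    intro v hv
    have h1 : (0 : ℤ) ≤ (a v : ℤ) := Int.natCast_nonneg _
    have h2 : v i₀ < 0 := hall v hv
    exact mul_nonpos_of_nonneg_of_nonpos h1 (le_of_lt h2)
  linarith

lemma sb_abs_coord (M : Sandpile d) {r : ℕ} (hr : M.IsRadius r)
    {y : Fin d → ℤ} (hy : y ∈ M.N) (i : Fin d) : -(r : ℤ) ≤ y i ∧ y i ≤ (r : ℤ) := by
  have := hr.1 y hy i
  omega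

end Aux2
section Aux3
variable {d : ℕ}

/-- Key absorbing lemma: an occupied window of width 2r stays occupied. -/
lemma sb_absorb (M : Sandpile d) (hcomp : M.Complete) {r : ℕ} (hr : M.IsRadius r)
    {c : (Fin d → ℤ) → ℕ} (i₀ : Fin d) (m : ℤ)
    (h : ∃ z, c z ≠ 0 ∧ m ≤ z i₀ ∧ z i₀ < m + 2 * r) :
    ∃ z, M.F c z ≠ 0 ∧ m ≤ z i₀ ∧ z i₀ < m + 2 * r := by
  obtain ⟨z, hz0, hz1, hz2⟩ := h
  rcases lt_or_ge (c z) M.θ with hlt | hge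
  · exact ⟨z, sb_F_keep M hz0 hlt, hz1, hz2⟩
  · rcases lt_or_ge (z i₀) (m + r) with hcase | hcase
    · obtain ⟨y, hyN, hy⟩ := sb_sign_le M hcomp i₀
      obtain ⟨hy1, hy2⟩ := sb_abs_coord M hr hyN i₀
      refine ⟨z - y, ?_, ?_, ?_⟩
      · have hzz : (z - y) + y = z := by abel
        exact sb_F_recv M hyN (by rw [hzz]; exact hge)
      · have : (z - y) i₀ = z i₀ - y i₀ := rfl
        omega
      · have : (z - y) i₀ = z i₀ - y i₀ := rfl
        omega
    · obtain ⟨y, hyN, hy⟩ := sb_sign_ge M hcomp i₀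
      obtain ⟨hy1, hy2⟩ := sb_abs_coord M hr hyN i₀
      refine ⟨z - y, ?_, ?_, ?_⟩
      · have hzz : (z - y) + y = z := by abel
        exact sb_F_recv M hyN (by rw [hzz]; exact hge)
      · have : (z - y) i₀ = z i₀ - y i₀ := rfl
        omega
      · have : (z - y) i₀ = z i₀ - y i₀ := rfl
        omega

lemma sb_absorb_iter (M : Sandpile d) (hcomp : M.Complete) {r : ℕ} (hr : M.IsRadius r)
    (c : (Fin d → ℤ) → ℕ) (i₀ : Fin d) (m : ℤ) :
    ∀ k s, (∃ z, M.F^[s] c z ≠ 0 ∧ m ≤ z i₀ ∧ z i₀ < m + 2 * r) →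
      ∃ z, M.F^[s + k] c z ≠ 0 ∧ m ≤ z i₀ ∧ z i₀ < m + 2 * r := by
  intro k
  induction k with
  | zero => intro s h; exact h
  | succ k ih =>
    intro s h
    have h1 := ih s h
    have : s + (k + 1) = (s + k) + 1 := by omega
    rw [this, Function.iterate_succ_apply']
    exact sb_absorb M hcomp hr i₀ m h1

end Aux3
section Aux4
variable {d : ℕ}

/-- Backward trace: a nonzero cell at time t comes from a path back to time 0. -/
lemma sb_path (M : Sandpile d) (c : (Fin d → ℤ) → ℕ) :
    ∀ (t : ℕ) (x : Fin d → ℤ), M.F^[t] c x ≠ 0 →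
      ∃ p : ℕ → (Fin d → ℤ), p t = x ∧ (∀ s, s ≤ t → M.F^[s] c (p s) ≠ 0) ∧
        (∀ s, s + 1 ≤ t → p (s + 1) = p s ∨ ∃ y ∈ M.N, p s = p (s + 1) + y) := by
  intro t
  induction t with
  | zero =>
    intro x h
    exact ⟨fun _ => x, rfl, fun s hs => by simpa [Nat.le_zero.mp hs] using h,
      fun s hs => by omega⟩
  | succ t ih =>
    intro x h
    have h' : M.F (M.F^[t] c) x ≠ 0 := by
      have h2 := h
      rwa [Function.iterate_succ_apply'] at h2
    rcases sb_back M h' with hx | ⟨y, hyN, hy⟩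
    · obtain ⟨p, hp1, hp2, hp3⟩ := ih x hx
      refine ⟨fun s => if s ≤ t then p s else x, by simp, ?_, ?_⟩
      · intro s hs
        by_cases hst : s ≤ t
        · simpa [hst] using hp2 s hst
        · have : s = t + 1 := by omega
          simp only [hst, if_false]
          rw [this]; exact h
      · intro s hs
        by_cases hst : s + 1 ≤ t
        · have hs' : s ≤ t := by omega
          simp only [hst, hs', if_true]
          exact hp3 s hst
        · have h1 : s = t := by omega
          have h2 : ¬ (s + 1 ≤ t) := by omega
          left
          subst h1
          simp only []
          rw [if_neg (by omega : ¬ (s + 1 ≤ s)), if_pos (le_refl s), hp1]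
    · have hx' : M.F^[t] c (x + y) ≠ 0 := by
        have := sb_theta_pos M
        omega
      obtain ⟨p, hp1, hp2, hp3⟩ := ih (x + y) hx'
      refine ⟨fun s => if s ≤ t then p s else x, by simp, ?_, ?_⟩
      · intro s hs
        by_cases hst : s ≤ t
        · simpa [hst] using hp2 s hst
        · have : s = t + 1 := by omega
          simp only [hst, if_false]
          rw [this]; exact h
      · intro s hs
        by_cases hst : s + 1 ≤ t
        · have hs' : s ≤ t := by omega
          simp only [hst, hs', if_true]
          exact hp3 s hst
        · have h1 : s = t := by omega
          have h2 : ¬ (s + 1 ≤ t) := by omega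
          right
          refine ⟨y, hyN, ?_⟩
          subst h1
          simp only []
          rw [if_neg (by omega : ¬ (s + 1 ≤ s)), if_pos (le_refl s), hp1]
  
/-- Discrete intermediate value: a path with steps ≤ r crossing level m
lands in [m, m+r). -/
lemma sb_cross (q : ℕ → ℤ) (r : ℤ) :
    ∀ (t : ℕ), (∀ s, s + 1 ≤ t → |q (s + 1) - q s| ≤ r) →
      ∀ m : ℤ, q 0 < m → m ≤ q t → ∃ s, s ≤ t ∧ m ≤ q s ∧ q s < m + r := by
  intro t
  induction t with
  | zero => intro _ m h0 ht; omega
  | succ t ih =>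
    intro hstep m h0 ht
    by_cases hm : m ≤ q t
    · obtain ⟨s, hs1, hs2⟩ := ih (fun s hs => hstep s (by omega)) m h0 hm
      exact ⟨s, by omega, hs2⟩
    · push_neg at hm
      have habs := hstep t (le_refl _)
      have h1 : q (t + 1) - q t ≤ r := by
        have := abs_le.mp habs; exact this.2
      exact ⟨t + 1, le_refl _, ht, by omega⟩

/-- Support bound: after t steps the support lies in the box of radius n + r t. -/
lemma sb_supp (M : Sandpile d) (c : (Fin d → ℤ) → ℕ) (n : ℕ) {r : ℕ}
    (hcube : InCube n c) (hr : M.IsRadius r) :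
    ∀ (t : ℕ) (z : Fin d → ℤ), M.F^[t] c z ≠ 0 → ∀ i, |z i| ≤ (n : ℤ) + r * t := by
  intro t
  induction t with
  | zero =>
    intro z hz i
    simp only [Function.iterate_zero, id] at hz
    by_cases hc : ∀ j, 0 ≤ z j ∧ z j < (n : ℤ)
    · have := hc i
      rw [abs_of_nonneg this.1]
      simpa using le_of_lt this.2
    · exact absurd (hcube z hc) hz
  | succ t ih =>
    intro z hz i
    have hz' : M.F (M.F^[t] c) z ≠ 0 := by
      have h2 := hz
      rwa [Function.iterate_succ_apply'] at h2
    have hcast : ((t : ℤ) + 1) = ((t + 1 : ℕ) : ℤ) := by push_cast; ring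
    rcases sb_back M hz' with hx | ⟨y, hyN, hy⟩
    · have := ih z hx i
      have hr0 : (0 : ℤ) ≤ r := Int.natCast_nonneg _
      push_cast
      push_cast at this
      nlinarith
    · have hocc : M.F^[t] c (z + y) ≠ 0 := by
        have := sb_theta_pos M
        omega
      have h1 := ih (z + y) hocc i
      obtain ⟨h2, h3⟩ := sb_abs_coord M hr hyN i
      have h4 : (z + y) i = z i + y i := rfl
      rw [h4] at h1
      have h5 := abs_le.mp h1
      have : |z i| ≤ (n : ℤ) + r * t + r := by
        rw [abs_le]; omega
      push_cast
      push_cast at this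
      linarith
end Aux4
section Aux5
variable {d : ℕ}
open Finset

/-- Sub-conservation of mass: summing over any set containing the support,
one step of the dynamics does not increase total mass. -/
lemma sb_cons (M : Sandpile d) {c : (Fin d → ℤ) → ℕ} (B : Finset (Fin d → ℤ))
    (hB : ∀ z, c z ≠ 0 → z ∈ B) :
    ∑ x ∈ B, M.F c x ≤ ∑ x ∈ B, c x := by
  classical
  set TOP := B.filter (fun z => M.θ ≤ c z) with hTOP
  -- pointwise: c x = (c x - θ·H) + (if θ ≤ c x then θ else 0)
  have hpoint : ∀ x ∈ B, c x = (c x - M.θ * Heaviside ((c x : ℤ) - (M.θ : ℤ)))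
      + (if M.θ ≤ c x then M.θ else 0) := by
    intro x _
    rcases le_or_gt M.θ (c x) with h | h
    · rw [sb_H_one h, if_pos h]; omega
    · rw [sb_H_zero h, if_neg (by omega)]; omega
  have hS1 : ∑ x ∈ B, c x =
      (∑ x ∈ B, (c x - M.θ * Heaviside ((c x : ℤ) - (M.θ : ℤ)))) + M.θ * TOP.card := by
    rw [Finset.sum_congr rfl hpoint, Finset.sum_add_distrib]
    congr 1
    rw [hTOP, Finset.card_eq_sum_ones, Finset.sum_filter, Finset.mul_sum]
    apply Finset.sum_congr rfl
    intro x _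
    split <;> simp
  have hS2 : ∑ x ∈ B, ∑ y ∈ M.N, M.D y * Heaviside ((c (x + y) : ℤ) - (M.θ : ℤ))
      ≤ M.θ * TOP.card := by
    rw [Finset.sum_comm]
    have hterm : ∀ y ∈ M.N,
        ∑ x ∈ B, M.D y * Heaviside ((c (x + y) : ℤ) - (M.θ : ℤ))
          ≤ M.D y * TOP.card := by
      intro y hy
      rw [← Finset.mul_sum]
      apply Nat.mul_le_mul_left
      have hcard : ∑ x ∈ B, Heaviside ((c (x + y) : ℤ) - (M.θ : ℤ))
          = (B.filter (fun x => M.θ ≤ c (x + y))).card := by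
        rw [Finset.card_eq_sum_ones, Finset.sum_filter]
        apply Finset.sum_congr rfl
        intro x _
        rcases le_or_gt M.θ (c (x + y)) with h | h
        · rw [sb_H_one h, if_pos h]
        · rw [sb_H_zero h, if_neg (by omega)]
      rw [hcard]
      apply Finset.card_le_card_of_injOn (fun x => x + y)
      · intro x hx
        rw [Finset.mem_coe] at hx ⊢
        show x + y ∈ TOP
        rw [Finset.mem_filter] at hx ⊢
        have hθ := sb_theta_pos M
        exact ⟨hB _ (by omega), hx.2⟩
      · intro a _ b _ hab
        simpa using congrArg (fun w => w - y) hab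
    calc ∑ y ∈ M.N, ∑ x ∈ B, M.D y * Heaviside ((c (x + y) : ℤ) - (M.θ : ℤ))
        ≤ ∑ y ∈ M.N, M.D y * TOP.card := Finset.sum_le_sum hterm
      _ = M.θ * TOP.card := by rw [← Finset.sum_mul]; rfl
  calc ∑ x ∈ B, M.F c x
      = (∑ x ∈ B, (c x - M.θ * Heaviside ((c x : ℤ) - (M.θ : ℤ))))
        + ∑ x ∈ B, ∑ y ∈ M.N, M.D y * Heaviside ((c (x + y) : ℤ) - (M.θ : ℤ)) := by
        rw [← Finset.sum_add_distrib]; rfl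
    _ ≤ (∑ x ∈ B, (c x - M.θ * Heaviside ((c x : ℤ) - (M.θ : ℤ)))) + M.θ * TOP.card :=
        Nat.add_le_add_left hS2 _
    _ = ∑ x ∈ B, c x := hS1.symm

end Aux5
section Aux6
variable {d : ℕ}
open Finset

/-- The box of radius a. -/
noncomputable def sbBox (d : ℕ) (a : ℤ) : Finset (Fin d → ℤ) :=
  Fintype.piFinset (fun _ : Fin d => Finset.Icc (-a) a)

lemma sb_mem_box {a : ℤ} {z : Fin d → ℤ} (h : ∀ i, |z i| ≤ a) : z ∈ sbBox d a := by
  rw [sbBox, Fintype.mem_piFinset]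
  intro i
  rw [Finset.mem_Icc]
  have := abs_le.mp (h i)
  omega

lemma sb_box_mono {a b : ℤ} (h : a ≤ b) : sbBox d a ⊆ sbBox d b := by
  intro z hz
  rw [sbBox, Fintype.mem_piFinset] at hz ⊢
  intro i
  have := hz i
  rw [Finset.mem_Icc] at *
  omega

lemma sb_mass_chain (M : Sandpile d) (c : (Fin d → ℤ) → ℕ) (n : ℕ) {r : ℕ}
    (hcube : InCube n c) (hr : M.IsRadius r) :
    ∀ t : ℕ, ∑ x ∈ sbBox d ((n : ℤ) + r * t), M.F^[t] c x ≤ ∑ x ∈ sbBox d (n : ℤ), c x := by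
  intro t
  induction t with
  | zero => simp
  | succ t ih =>
    have hsub : sbBox d ((n : ℤ) + r * t) ⊆ sbBox d ((n : ℤ) + r * (t + 1)) := by
      apply sb_box_mono
      have : (0 : ℤ) ≤ r := Int.natCast_nonneg _
      nlinarith
    calc ∑ x ∈ sbBox d ((n : ℤ) + r * (t + 1)), M.F^[t+1] c x
        = ∑ x ∈ sbBox d ((n : ℤ) + r * (t + 1)), M.F (M.F^[t] c) x := by
          apply Finset.sum_congr rfl
          intro x _
          rw [Function.iterate_succ_apply']
      _ ≤ ∑ x ∈ sbBox d ((n : ℤ) + r * (t + 1)), M.F^[t] c x := by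
          apply sb_cons
          intro z hz
          apply sb_mem_box
          intro i
          have h1 := sb_supp M c n hcube hr t z hz i
          have : (0 : ℤ) ≤ r := Int.natCast_nonneg _
          push_cast at h1
          nlinarith
      _ = ∑ x ∈ sbBox d ((n : ℤ) + r * t), M.F^[t] c x := by
          symm
          apply Finset.sum_subset hsub
          intro z _ hz
          by_contra hne
          exact hz (sb_mem_box (sb_supp M c n hcube hr t z hne))
      _ ≤ _ := ih

/-- Initial mass bound. -/
lemma sb_mass0 (M : Sandpile d) (c : (Fin d → ℤ) → ℕ) (n : ℕ)
    (hcube : InCube n c) (hbound : ∀ x, c x < 2 * M.θ) :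
    ∑ x ∈ sbBox d (n : ℤ), c x ≤ (2 * M.θ - 1) * n ^ d := by
  classical
  set CU : Finset (Fin d → ℤ) := Fintype.piFinset (fun _ : Fin d => Finset.Icc 0 ((n : ℤ) - 1)) with hCU
  have hsub : CU ⊆ sbBox d (n : ℤ) := by
    intro z hz
    rw [hCU, Fintype.mem_piFinset] at hz
    apply sb_mem_box
    intro i
    have := hz i
    rw [Finset.mem_Icc] at this
    rw [abs_le]
    omega
  have heq : ∑ x ∈ sbBox d (n : ℤ), c x = ∑ x ∈ CU, c x := by
    symm
    apply Finset.sum_subset hsub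
    intro z _ hz
    apply hcube
    intro hall
    apply hz
    rw [hCU, Fintype.mem_piFinset]
    intro i
    rw [Finset.mem_Icc]
    have := hall i
    omega
  have hcard : CU.card = n ^ d := by
    rw [hCU, Fintype.card_piFinset]
    have : ∀ i : Fin d, (Finset.Icc (0 : ℤ) ((n : ℤ) - 1)).card = n := by
      intro i
      rw [Int.card_Icc]
      simp
    rw [Finset.prod_congr rfl (fun i _ => this i)]
    simp [Finset.prod_const]
  rw [heq]
  calc ∑ x ∈ CU, c x ≤ ∑ x ∈ CU, (2 * M.θ - 1) := by
        apply Finset.sum_le_sum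
        intro x _
        have := hbound x
        omega
    _ = (2 * M.θ - 1) * n ^ d := by
        rw [Finset.sum_const, hcard, smul_eq_mul, Nat.mul_comm]

end Aux6
theorem sandpile_spread_bound {d : ℕ} (hd : 1 ≤ d) (M : Sandpile d)
    (hcomp : M.Complete) (r : ℕ) (hr : M.IsRadius r) (n : ℕ)
    (c : (Fin d → ℤ) → ℕ) (hcube : InCube n c) (hbound : ∀ x, c x < 2 * M.θ)
    (t : ℕ) (x : Fin d → ℤ) (hx : ∃ i, 4 * M.θ * r * n ^ d < (x i).natAbs) :
    M.F^[t] c x = 0 := by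
  classical
  by_contra h
  obtain ⟨i₀, hX⟩ := hx
  have θpos := sb_theta_pos M
  have rpos := sb_r_pos M hr
  have rZ : (1 : ℤ) ≤ (r : ℤ) := by exact_mod_cast rpos
  -- the backward path
  obtain ⟨p, hpt, hpocc, hpstep⟩ := sb_path M c t x h
  have hcube0 : ∀ i, 0 ≤ p 0 i ∧ p 0 i < (n : ℤ) := by
    by_contra hc
    exact (hpocc 0 (Nat.zero_le t)) (by simpa using hcube (p 0) hc)
  have hn1 : 1 ≤ n := by
    have h0 := hcube0 i₀
    have : (0 : ℤ) < (n : ℤ) := lt_of_le_of_lt h0.1 h0.2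
    exact_mod_cast this
  -- coordinate steps bounded by r
  have hstepC : ∀ s, s + 1 ≤ t → |p (s + 1) i₀ - p s i₀| ≤ (r : ℤ) := by
    intro s hs
    rcases hpstep s hs with he | ⟨y, hyN, he⟩
    · rw [he]
      simp only [sub_self, abs_zero]
      omega
    · have hco : p s i₀ = p (s + 1) i₀ + y i₀ := by
        rw [he]; rfl
      obtain ⟨h1, h2⟩ := sb_abs_coord M hr hyN i₀
      rw [abs_le]
      omega
  -- total mass
  set Tm := ∑ x' ∈ sbBox d (n : ℤ), c x' with hTmdef
  have hTmb : Tm ≤ (2 * M.θ - 1) * n ^ d := sb_mass0 M c n hcube hbound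
  set A := 4 * M.θ * r * n ^ d with hAdef
  have hnd : n ≤ n ^ d := Nat.le_self_pow (by omega) n
  have key1 : 2 * r * Tm + 2 * r * n ^ d ≤ A := by
    have h1 : Tm + n ^ d ≤ 2 * M.θ * n ^ d := by
      have h3 : n ^ d ≤ 2 * M.θ * n ^ d := Nat.le_mul_of_pos_left _ (by omega)
      have h2 : (2 * M.θ - 1) * n ^ d + n ^ d = 2 * M.θ * n ^ d := by
        rw [Nat.sub_mul, one_mul]
        omega
      omega
    calc 2 * r * Tm + 2 * r * n ^ d = 2 * r * (Tm + n ^ d) := by ring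
      _ ≤ 2 * r * (2 * M.θ * n ^ d) := Nat.mul_le_mul_left _ h1
      _ = A := by rw [hAdef]; ring
  have key3 : 2 * r * Tm ≤ A := by omega
  have key2 : n + 2 * r * Tm ≤ A := by
    have h2 : n ≤ 2 * r * n ^ d := by
      calc n ≤ n ^ d := hnd
        _ ≤ 2 * r * n ^ d := Nat.le_mul_of_pos_left _ (by omega)
    omega
  have hAabs : (A : ℤ) < |x i₀| := by
    rw [Int.abs_eq_natAbs]
    exact_mod_cast hX
  -- window construction, by sign of x i₀
  obtain ⟨mf, hsep, hwin⟩ : ∃ mf : ℕ → ℤ,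
      (∀ k1 k2, k1 < k2 → mf k1 + 2 * r ≤ mf k2 ∨ mf k2 + 2 * r ≤ mf k1) ∧
      (∀ k, k ≤ Tm → ∃ s, s ≤ t ∧ mf k ≤ p s i₀ ∧ p s i₀ < mf k + 2 * r) := by
    have hcast2 : ((2 * r * Tm : ℕ) : ℤ) = 2 * (r : ℤ) * (Tm : ℤ) := by push_cast; ring
    rcases le_or_gt 0 (x i₀) with hsgn | hsgn
    · -- positive side
      have hXpos : (A : ℤ) < x i₀ := by rwa [abs_of_nonneg hsgn] at hAabs
      refine ⟨fun k => (n : ℤ) + 2 * r * k, ?_, ?_⟩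
      · intro k1 k2 hk
        left
        show ((n : ℤ) + 2 * r * k1) + 2 * r ≤ (n : ℤ) + 2 * r * k2
        have hkk : (k1 : ℤ) + 1 ≤ (k2 : ℤ) := by exact_mod_cast hk
        have := mul_le_mul_of_nonneg_left hkk (by positivity : (0:ℤ) ≤ 2 * (r:ℤ))
        linarith
      · intro k hk
        have hkZ : (k : ℤ) ≤ (Tm : ℤ) := by exact_mod_cast hk
        have hmb : (n : ℤ) + 2 * r * k ≤ (A : ℤ) := by
          have h4 := mul_le_mul_of_nonneg_left hkZ (by positivity : (0:ℤ) ≤ 2 * (r:ℤ))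
          have h5 : ((n + 2 * r * Tm : ℕ) : ℤ) ≤ (A : ℤ) := by exact_mod_cast key2
          push_cast at h5
          linarith
        have hq0 : (fun s => p s i₀) 0 < (n : ℤ) + 2 * r * k := by
          show p 0 i₀ < (n : ℤ) + 2 * r * k
          have h6 := (hcube0 i₀).2
          have h7 : (0:ℤ) ≤ 2 * (r:ℤ) * (k:ℤ) := by positivity
          linarith
        have hqt : (n : ℤ) + 2 * r * k ≤ (fun s => p s i₀) t := by
          show (n : ℤ) + 2 * r * k ≤ p t i₀
          rw [hpt]
          linarith
        obtain ⟨s, hs1, hs2, hs3⟩ := sb_cross (fun s => p s i₀) (r : ℤ) t hstepC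
          ((n : ℤ) + 2 * r * k) hq0 hqt
        refine ⟨s, hs1, ?_, ?_⟩
        · show (n : ℤ) + 2 * r * k ≤ p s i₀
          linarith
        · show p s i₀ < ((n : ℤ) + 2 * r * k) + 2 * r
          linarith
    · -- negative side
      have hXneg : (A : ℤ) < -(x i₀) := by rwa [abs_of_neg hsgn] at hAabs
      refine ⟨fun k => -(2 * (r:ℤ) * ((k:ℤ) + 1)), ?_, ?_⟩
      · intro k1 k2 hk
        right
        show (-(2 * (r:ℤ) * ((k2:ℤ) + 1))) + 2 * r ≤ -(2 * (r:ℤ) * ((k1:ℤ) + 1))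
        have hkk : (k1 : ℤ) + 1 ≤ (k2 : ℤ) := by exact_mod_cast hk
        have := mul_le_mul_of_nonneg_left hkk (by positivity : (0:ℤ) ≤ 2 * (r:ℤ))
        linarith
      · intro k hk
        have hkZ : (k : ℤ) ≤ (Tm : ℤ) := by exact_mod_cast hk
        have hstepN : ∀ s, s + 1 ≤ t → |(-(p (s+1) i₀)) - (-(p s i₀))| ≤ (r : ℤ) := by
          intro s hs
          have := hstepC s hs
          rw [show (-(p (s+1) i₀)) - (-(p s i₀)) = -(p (s+1) i₀ - p s i₀) by ring, abs_neg]
          exact this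
        have hq0 : (fun s => -(p s i₀)) 0 < 2 * (r:ℤ) * (k:ℤ) + 1 := by
          show -(p 0 i₀) < 2 * (r:ℤ) * (k:ℤ) + 1
          have := (hcube0 i₀).1
          have h6 : (0:ℤ) ≤ 2 * (r:ℤ) * (k:ℤ) := by positivity
          linarith
        have hqt : 2 * (r:ℤ) * (k:ℤ) + 1 ≤ (fun s => -(p s i₀)) t := by
          show 2 * (r:ℤ) * (k:ℤ) + 1 ≤ -(p t i₀)
          rw [hpt]
          have h4 := mul_le_mul_of_nonneg_left hkZ (by positivity : (0:ℤ) ≤ 2 * (r:ℤ))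
          have h5 : ((2 * r * Tm : ℕ) : ℤ) ≤ (A : ℤ) := by exact_mod_cast key3
          push_cast at h5
          linarith
        obtain ⟨s, hs1, hs2, hs3⟩ := sb_cross (fun s => -(p s i₀)) (r : ℤ) t hstepN
          (2 * (r:ℤ) * (k:ℤ) + 1) hq0 hqt
        refine ⟨s, hs1, ?_, ?_⟩
        · show -(2 * (r:ℤ) * ((k:ℤ) + 1)) ≤ p s i₀
          linarith
        · show p s i₀ < (-(2 * (r:ℤ) * ((k:ℤ) + 1))) + 2 * r
          linarith
  -- each window is occupied at time t
  have hwt : ∀ k, k ≤ Tm → ∃ z, M.F^[t] c z ≠ 0 ∧ mf k ≤ z i₀ ∧ z i₀ < mf k + 2 * r := by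
    intro k hk
    obtain ⟨s, hst, hs1, hs2⟩ := hwin k hk
    have hocc : ∃ z, M.F^[s] c z ≠ 0 ∧ mf k ≤ z i₀ ∧ z i₀ < mf k + 2 * r :=
      ⟨p s, hpocc s hst, hs1, hs2⟩
    have := sb_absorb_iter M hcomp hr c i₀ (mf k) (t - s) s hocc
    rwa [Nat.add_sub_cancel' hst] at this
  have hchoice : ∀ k, ∃ z : Fin d → ℤ, k ≤ Tm →
      (M.F^[t] c z ≠ 0 ∧ mf k ≤ z i₀ ∧ z i₀ < mf k + 2 * r) := by
    intro k
    by_cases hk : k ≤ Tm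
    · obtain ⟨z, hz⟩ := hwt k hk
      exact ⟨z, fun _ => hz⟩
    · exact ⟨0, fun h' => absurd h' hk⟩
  choose w hw using hchoice
  set W := (Finset.range (Tm + 1)).image w with hW
  have hinj : Set.InjOn w ↑(Finset.range (Tm + 1)) := by
    intro a ha b hb hab
    simp only [Finset.coe_range, Set.mem_Iio] at ha hb
    by_contra hne
    have hiw : w a i₀ = w b i₀ := by rw [hab]
    rcases Nat.lt_or_ge a b with hlt | hge
    · obtain ⟨_, ha1, ha2⟩ := hw a (by omega)
      obtain ⟨_, hb1, hb2⟩ := hw b (by omega)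
      rcases hsep a b hlt with hs | hs <;> omega
    · have hlt : b < a := by omega
      obtain ⟨_, ha1, ha2⟩ := hw a (by omega)
      obtain ⟨_, hb1, hb2⟩ := hw b (by omega)
      rcases hsep b a hlt with hs | hs <;> omega
  have hWcard : W.card = Tm + 1 := by
    rw [hW, Finset.card_image_of_injOn hinj, Finset.card_range]
  have hsubW : W ⊆ sbBox d ((n : ℤ) + r * t) := by
    intro z hz
    rw [hW, Finset.mem_image] at hz
    obtain ⟨k, hk, rfl⟩ := hz
    rw [Finset.mem_range] at hk
    exact sb_mem_box (sb_supp M c n hcube hr t _ ((hw k (by omega)).1))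
  have hlow : Tm + 1 ≤ ∑ x' ∈ sbBox d ((n : ℤ) + r * t), M.F^[t] c x' := by
    calc Tm + 1 = W.card := hWcard.symm
      _ = ∑ _x' ∈ W, 1 := by rw [Finset.card_eq_sum_ones]
      _ ≤ ∑ x' ∈ W, M.F^[t] c x' := by
          apply Finset.sum_le_sum
          intro z hz
          rw [hW, Finset.mem_image] at hz
          obtain ⟨k, hk, rfl⟩ := hz
          rw [Finset.mem_range] at hk
          have := (hw k (by omega)).1
          omega
      _ ≤ _ := Finset.sum_le_sum_of_subset hsubW
  have hup := sb_mass_chain M c n hcube hr t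
  rw [← hTmdef] at hup
  omega
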